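/- For natural numbers m, n, l: \binom{m+l}{n} - \binom{l}{n} = -\sum_{k=1}^{\min(m,n)} E_k(0) \binom{m}{k} (\binom{m-k+l}{n-k} + \binom{l}{n-k}). -/

import Mathlib

open Finset Polynomial

noncomputable def eulerPoly : ℕ → Polynomial ℚ :=
  WellFounded.fix Nat.lt_wfRel.wf fun n E =>
    Polynomial.X ^ n - Polynomial.C (1/2 : ℚ) *
      ∑ k : Fin n, Polynomial.C (n.choose k : ℚ) * E k k.2

noncomputable def ee (k : ℕ) : ℚ := (eulerPoly k).eval 0

lemma eulerPoly_def (n : ℕ) : eulerPoly n =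
    Polynomial.X ^ n - Polynomial.C (1/2 : ℚ) *
      ∑ k : Fin n, Polynomial.C (n.choose k : ℚ) * eulerPoly k :=
  WellFounded.fix_eq _ _ _

lemma ee_rec (n : ℕ) :
    ee n = (0:ℚ)^n - (1/2) * ∑ k ∈ range n, (n.choose k : ℚ) * ee k := by
  unfold ee
  rw [eulerPoly_def]
  rw [Fin.sum_univ_eq_sum_range (fun k => Polynomial.C (n.choose k : ℚ) * eulerPoly k) n]
  simp [eval_finset_sum]

lemma ee_key (i : ℕ) :
    (∑ k ∈ range (i+1), (i.choose k : ℚ) * ee k) + ee i = if i = 0 then 2 else 0 := by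
  have h := ee_rec i
  rw [Finset.sum_range_succ, Nat.choose_self]
  have h0 : (0:ℚ)^i = if i = 0 then 1 else 0 := by
    rcases eq_or_ne i 0 with rfl | h1
    · simp
    · simp [zero_pow h1, h1]
  rcases eq_or_ne i 0 with rfl | hi <;> simp_all <;> linarith

lemma trinom (m t k : ℕ) (hk : k ≤ t) :
    (m.choose k : ℚ) * ((m - k).choose (t - k) : ℚ) = (m.choose t : ℚ) * (t.choose k : ℚ) := by
  rcases le_or_gt t m with h | h
  · exact_mod_cast (Nat.choose_mul hk).symm
  · rw [Nat.choose_eq_zero_of_lt h]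
    rcases le_or_gt k m with h2 | h2
    · rw [Nat.choose_eq_zero_of_lt (by omega : m - k < t - k)]
      simp
    · rw [Nat.choose_eq_zero_of_lt h2]; simp

def LL (g : ℕ → ℕ → ℚ) (N : ℕ) : ℚ := ∑ k ∈ range (N+1), ∑ j ∈ range (N+1-k), g k j

lemma LL_step (g : ℕ → ℕ → ℚ) (N : ℕ) :
    LL g (N+1) = LL g N + ∑ k ∈ range (N+2), g k (N+1-k) := by
  unfold LL
  rw [Finset.sum_range_succ (fun k => ∑ j ∈ range (N+2-k), g k j),
      Finset.sum_range_succ (fun k => g k (N+1-k))]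
  have : ∀ k ∈ range (N+1), ∑ j ∈ range (N+2-k), g k j
      = (∑ j ∈ range (N+1-k), g k j) + g k (N+1-k) := by
    intro k hk
    rw [Finset.mem_range] at hk
    have : N+2-k = (N+1-k)+1 := by omega
    rw [this, Finset.sum_range_succ]
  rw [Finset.sum_congr rfl this, Finset.sum_add_distrib]
  simp
  ring

lemma tri_swap_aux (f : ℕ → ℕ → ℚ) (N : ℕ) : LL f N = LL (fun j k => f k j) N := by
  induction N with
  | zero => simp [LL]
  | succ N ih =>
    rw [LL_step, LL_step, ih]
    congr 1
    rw [← Finset.sum_range_reflect (fun k => f k (N+1-k)) (N+2)]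
    apply Finset.sum_congr rfl
    intro j hj
    rw [Finset.mem_range] at hj
    congr 1 <;> omega

lemma tri_swap (f : ℕ → ℕ → ℚ) (N : ℕ) :
    ∑ k ∈ range (N+1), ∑ j ∈ range (N+1-k), f k j
      = ∑ j ∈ range (N+1), ∑ k ∈ range (N+1-j), f k j :=
  tri_swap_aux f N

lemma vander (a l t : ℕ) :
    ((a + l).choose t : ℚ) = ∑ j ∈ range (t+1), (l.choose j : ℚ) * ((a).choose (t - j) : ℚ) := by
  rw [add_comm a l, Nat.add_choose_eq, Finset.Nat.sum_antidiagonal_eq_sum_range_succ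
    (fun x y => l.choose x * a.choose y)]
  push_cast
  rfl

lemma main_sum (m n l : ℕ) :
    ∑ k ∈ range (n+1), ee k * (m.choose k : ℚ) *
      (((m - k + l).choose (n - k) : ℚ) + (l.choose (n - k) : ℚ)) = 2 * (l.choose n : ℚ) := by
  have expand : ∀ k ∈ range (n+1), ee k * (m.choose k : ℚ) *
      (((m - k + l).choose (n - k) : ℚ) + (l.choose (n - k) : ℚ))
      = (∑ j ∈ range (n+1-k), ee k * (m.choose k : ℚ) * (l.choose j : ℚ)
            * ((m - k).choose (n - k - j) : ℚ))
        + ee k * (m.choose k : ℚ) * (l.choose (n - k) : ℚ) := by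
    intro k hk
    rw [Finset.mem_range] at hk
    rw [vander (m-k) l (n-k), mul_add, Finset.mul_sum]
    have : n - k + 1 = n + 1 - k := by omega
    rw [← this]
    congr 1
    apply Finset.sum_congr rfl
    intro j hj
    ring
  rw [Finset.sum_congr rfl expand, Finset.sum_add_distrib]
  have hS1 : ∑ k ∈ range (n+1), (∑ j ∈ range (n+1-k), ee k * (m.choose k : ℚ) * (l.choose j : ℚ)
            * ((m - k).choose (n - k - j) : ℚ))
      = ∑ j ∈ range (n+1), (l.choose j : ℚ) * (m.choose (n-j) : ℚ)
          * ∑ k ∈ range ((n-j)+1), ((n-j).choose k : ℚ) * ee k := by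
    refine (tri_swap (fun k j => ee k * (m.choose k : ℚ) * (l.choose j : ℚ)
            * ((m - k).choose (n - k - j) : ℚ)) n).trans ?_
    apply Finset.sum_congr rfl
    intro j hj
    rw [Finset.mem_range] at hj
    rw [Finset.mul_sum]
    have : n + 1 - j = (n - j) + 1 := by omega
    rw [this]
    apply Finset.sum_congr rfl
    intro k hk
    rw [Finset.mem_range] at hk
    have h1 : n - k - j = (n - j) - k := by omega
    rw [h1, mul_comm (ee k) ((m.choose k : ℚ)), mul_assoc ((m.choose k : ℚ))]
    rw [show (m.choose k : ℚ) * (ee k * (l.choose j : ℚ)) * ((m - k).choose (n - j - k) : ℚ)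
      = ((m.choose k : ℚ) * ((m - k).choose (n - j - k) : ℚ)) * (ee k * (l.choose j : ℚ)) by ring]
    rw [trinom m (n-j) k (by omega)]
    ring
  rw [hS1]
  have hS2 : ∑ k ∈ range (n+1), ee k * (m.choose k : ℚ) * (l.choose (n - k) : ℚ)
      = ∑ j ∈ range (n+1), (l.choose j : ℚ) * (m.choose (n-j) : ℚ) * ee (n-j) := by
    rw [← Finset.sum_range_reflect (fun k => ee k * (m.choose k : ℚ) * (l.choose (n - k) : ℚ)) (n+1)]
    apply Finset.sum_congr rfl
    intro j hj
    rw [Finset.mem_range] at hj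
    have h1 : n + 1 - 1 - j = n - j := by omega
    have h2 : n - (n - j) = j := by omega
    rw [h1, h2]
    ring
  rw [hS2, ← Finset.sum_add_distrib]
  have collapse : ∀ j ∈ range (n+1), (l.choose j : ℚ) * (m.choose (n-j) : ℚ)
          * (∑ k ∈ range ((n-j)+1), ((n-j).choose k : ℚ) * ee k)
        + (l.choose j : ℚ) * (m.choose (n-j) : ℚ) * ee (n-j)
      = if j = n then 2 * (l.choose n : ℚ) else 0 := by
    intro j hj
    rw [Finset.mem_range] at hj
    rw [← mul_add, ee_key (n-j)]
    rcases eq_or_ne j n with rfl | hjn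
    · rw [if_pos rfl, Nat.sub_self, if_pos rfl]
      simp
      ring
    · rw [if_neg (by omega), if_neg hjn]
      ring
  rw [Finset.sum_congr rfl collapse, Finset.sum_ite_eq' (range (n+1)) n
    (fun _ => 2 * (l.choose n : ℚ))]
  simp

theorem binomial_diff_euler_identity (m n l : ℕ) :
    ((m + l).choose n : ℚ) - (l.choose n : ℚ) =
      - ∑ k ∈ Finset.Icc 1 (min m n),
          (eulerPoly k).eval 0 * (m.choose k : ℚ) *
            (((m - k + l).choose (n - k) : ℚ) + (l.choose (n - k) : ℚ)) := by
  have hP := main_sum m n l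
  set t := min m n with ht
  have htn : t ≤ n := min_le_right m n
  have htrunc : ∑ k ∈ range (t+1), ee k * (m.choose k : ℚ) *
      (((m - k + l).choose (n - k) : ℚ) + (l.choose (n - k) : ℚ))
      = ∑ k ∈ range (n+1), ee k * (m.choose k : ℚ) *
      (((m - k + l).choose (n - k) : ℚ) + (l.choose (n - k) : ℚ)) := by
    apply Finset.sum_subset
    · exact Finset.range_subset_range.mpr (by omega)
    · intro k hk hk2
      rw [Finset.mem_range] at hk hk2
      have hm : m < k := by omega
      rw [Nat.choose_eq_zero_of_lt hm]
      simp
  have hIcc : Finset.Icc 1 t = (Finset.range (t+1)).erase 0 := by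
    ext x
    simp only [Finset.mem_Icc, Finset.mem_erase, Finset.mem_range]
    omega
  have he0 : ee 0 = 1 := by rw [ee_rec]; simp
  have hsplit : ee 0 * (m.choose 0 : ℚ) *
        (((m - 0 + l).choose (n - 0) : ℚ) + (l.choose (n - 0) : ℚ))
      + ∑ k ∈ (Finset.range (t+1)).erase 0, ee k * (m.choose k : ℚ) *
        (((m - k + l).choose (n - k) : ℚ) + (l.choose (n - k) : ℚ))
      = ∑ k ∈ range (t+1), ee k * (m.choose k : ℚ) *
        (((m - k + l).choose (n - k) : ℚ) + (l.choose (n - k) : ℚ)) :=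
    Finset.add_sum_erase _ (fun k => ee k * (m.choose k : ℚ) *
      (((m - k + l).choose (n - k) : ℚ) + (l.choose (n - k) : ℚ)))
      (show (0:ℕ) ∈ range (t+1) by simp)
  rw [he0] at hsplit
  simp only [Nat.sub_zero, Nat.choose_zero_right, Nat.cast_one, one_mul, mul_one] at hsplit
  have : ∑ k ∈ Finset.Icc 1 t, (eulerPoly k).eval 0 * (m.choose k : ℚ) *
      (((m - k + l).choose (n - k) : ℚ) + (l.choose (n - k) : ℚ))
      = ∑ k ∈ (Finset.range (t+1)).erase 0, ee k * (m.choose k : ℚ) *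
        (((m - k + l).choose (n - k) : ℚ) + (l.choose (n - k) : ℚ)) := by
    rw [hIcc]; rfl
  rw [this]
  rw [htrunc] at hsplit
  linarith [hsplit, hP]
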